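/- Anytime Bernstein inequality, empirical form (Lemma B.3 of the paper): Let (X_i)_{i≥1} be a sequence of i.i.d. real random variables with X_i ∈ [0, B] almost surely, for a fixed constant B > 0, and let μ = E[X_1]. Then for every δ ∈ (0,1), with probability at least 1 − δ, simultaneously for all n ≥ 1: |Σ_{i=1}^n (X_i − μ)| ≤ 2·√(B·(Σ_{i=1}^n X_i)·ln(2n/δ)) + 7B·ln(2n/δ). -/

import Mathlib

open MeasureTheory ProbabilityTheory Finset

lemma exp_le_quad_of_nonpos {u : ℝ} (hu : u ≤ 0) : Real.exp u ≤ 1 + u + u^2/2 := by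
  have hd : ∀ x : ℝ, HasDerivAt (fun u : ℝ => 1 + u + u^2/2 - Real.exp u)
      (1 + x - Real.exp x) x := by
    intro x
    have h := (((hasDerivAt_id x).const_add 1).add ((hasDerivAt_pow 2 x).div_const 2)).sub
      (Real.hasDerivAt_exp x)
    refine h.congr_deriv ?_
    simp
  have key : Antitone (fun u : ℝ => 1 + u + u^2/2 - Real.exp u) := by
    apply antitone_of_deriv_nonpos (fun x => (hd x).differentiableAt)
    intro x
    rw [(hd x).deriv]
    nlinarith [Real.add_one_le_exp x]
  have h0 := key hu
  simp only [Real.exp_zero] at h0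
  nlinarith [h0]

lemma quad_pos_aux {u : ℝ} (hu : 0 ≤ u) :
    0 ≤ u^2/2 - (1 - u/3)*(Real.exp u - 1 - u) := by
  set h1 : ℝ → ℝ := fun x => x + (Real.exp x - 1 - x)/3 - (1 - x/3)*(Real.exp x - 1) with hh1
  set h0 : ℝ → ℝ := fun x => x^2/2 - (1 - x/3)*(Real.exp x - 1 - x) with hh0
  have hd1 : ∀ x : ℝ, HasDerivAt h0 (h1 x) x := by
    intro x
    have h := ((hasDerivAt_pow 2 x).div_const 2).sub
      ((((hasDerivAt_id x).div_const 3).const_sub 1).mul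
        (((Real.hasDerivAt_exp x).sub_const 1).sub (hasDerivAt_id x)))
    refine h.congr_deriv ?_
    simp [hh1]
    ring
  have hd2 : ∀ x : ℝ, HasDerivAt h1 ((1 + (x-1)*Real.exp x)/3) x := by
    intro x
    have h := ((hasDerivAt_id x).add ((((Real.hasDerivAt_exp x).sub_const 1).sub
        (hasDerivAt_id x)).div_const 3)).sub
      ((((hasDerivAt_id x).div_const 3).const_sub 1).mul ((Real.hasDerivAt_exp x).sub_const 1))
    refine h.congr_deriv ?_
    simp [hh1]
    ring
  have h1mono : Monotone h1 := by
    apply monotone_of_deriv_nonneg (fun x => (hd2 x).differentiableAt)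
    intro x
    rw [(hd2 x).deriv]
    have e1 : Real.exp (-x) * Real.exp x = 1 := by rw [← Real.exp_add]; simp
    nlinarith [Real.add_one_le_exp (-x), Real.exp_pos x, e1]
  have h1nonneg : ∀ x : ℝ, 0 ≤ x → 0 ≤ h1 x := by
    intro x hx
    have := h1mono hx
    simp [hh1] at this ⊢
    linarith
  have hmono : MonotoneOn h0 (Set.Ici 0) := by
    apply monotoneOn_of_deriv_nonneg (convex_Ici 0)
      (fun x _ => (hd1 x).differentiableAt.continuousAt.continuousWithinAt)
      (fun x hx => ((hd1 x).differentiableAt).differentiableWithinAt)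
    intro x hx
    rw [(hd1 x).deriv]
    exact h1nonneg x (le_of_lt (by simpa using hx))
  have := hmono (Set.self_mem_Ici) (Set.mem_Ici.mpr hu) hu
  simp [hh0] at this
  linarith

lemma exp_mul_le_quad {l y B : ℝ} (hl : 0 ≤ l) (hB : 0 ≤ B) (hyB : y ≤ B)
    (hc : l*B/3 < 1) :
    Real.exp (l*y) ≤ 1 + l*y + l^2*y^2 / (2*(1 - l*B/3)) := by
  have hden : 0 < 1 - l*B/3 := by linarith
  have hu2 : (l*y)^2 = l^2*y^2 := by ring
  rcases le_or_gt (l*y) 0 with h | h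
  · have h1 := exp_le_quad_of_nonpos h
    have h2 : (l*y)^2/2 ≤ (l*y)^2/(2*(1 - l*B/3)) := by
      apply div_le_div_of_nonneg_left (sq_nonneg _) (by linarith)
      nlinarith
    rw [← hu2]
    linarith
  · have hu3 : l*y ≤ l*B := mul_le_mul_of_nonneg_left hyB hl
    have hA : 0 ≤ Real.exp (l*y) - 1 - (l*y) := by
      have := Real.add_one_le_exp (l*y)
      linarith
    have hq := quad_pos_aux (le_of_lt h)
    have h3 : (1 - l*B/3) * (Real.exp (l*y) - 1 - (l*y)) ≤ (l*y)^2/2 := by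
      have : (1 - l*B/3) * (Real.exp (l*y) - 1 - (l*y))
          ≤ (1 - (l*y)/3) * (Real.exp (l*y) - 1 - (l*y)) := by
        apply mul_le_mul_of_nonneg_right _ hA
        linarith
      linarith
    have h4 : Real.exp (l*y) - 1 - (l*y) ≤ (l*y)^2/(2*(1 - l*B/3)) := by
      rw [le_div_iff₀ (by linarith)]
      linarith
    rw [← hu2]
    linarith

open MeasureTheory ProbabilityTheory in
lemma integrable_of_abs_le {Ω : Type*} [MeasurableSpace Ω] {μ : Measure Ω}
    [IsProbabilityMeasure μ] {f : Ω → ℝ} (hf : Measurable f) {C : ℝ}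
    (h : ∀ᵐ ω ∂μ, |f ω| ≤ C) : Integrable f μ :=
  (integrable_const C).mono' hf.aestronglyMeasurable (by simpa [Real.norm_eq_abs] using h)

open MeasureTheory ProbabilityTheory in
lemma mgf_le_of_bound {Ω : Type*} [MeasurableSpace Ω] {μ : Measure Ω}
    [IsProbabilityMeasure μ] {Y : Ω → ℝ} (hmeas : Measurable Y) {B v l : ℝ}
    (hB : 0 < B) (hl : 0 ≤ l) (hc : l*B/3 < 1)
    (hbd : ∀ᵐ ω ∂μ, |Y ω| ≤ B) (hzero : ∫ ω, Y ω ∂μ = 0)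
    (hvar : ∫ ω, (Y ω)^2 ∂μ ≤ v) :
    mgf Y μ l ≤ Real.exp (l^2 * v / (2*(1 - l*B/3))) := by
  have hden : 0 < 1 - l*B/3 := by linarith
  have hintY : Integrable Y μ := integrable_of_abs_le hmeas hbd
  have hintY2 : Integrable (fun ω => (Y ω)^2) μ := by
    apply integrable_of_abs_le (hmeas.pow_const 2) (C := B^2)
    filter_upwards [hbd] with ω hω
    rw [abs_pow]
    exact pow_le_pow_left₀ (abs_nonneg _) hω 2
  have hintExp : Integrable (fun ω => Real.exp (l * Y ω)) μ := by
    apply integrable_of_abs_le ((hmeas.const_mul l).exp) (C := Real.exp (l*B))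
    filter_upwards [hbd] with ω hω
    rw [abs_of_pos (Real.exp_pos _), Real.exp_le_exp]
    exact mul_le_mul_of_nonneg_left (le_trans (le_abs_self _) hω) hl
  have i1 : Integrable (fun ω => l * Y ω) μ := hintY.const_mul l
  have i2 : Integrable (fun ω => l^2 * (Y ω)^2 / (2*(1 - l*B/3))) μ :=
    (hintY2.const_mul _).div_const _
  have i12 : Integrable (fun ω => 1 + l * Y ω) μ := (integrable_const 1).add i1
  have hmono : ∫ ω, Real.exp (l * Y ω) ∂μ
      ≤ ∫ ω, (1 + l * Y ω + l^2 * (Y ω)^2 / (2*(1 - l*B/3))) ∂μ := by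
    apply integral_mono_ae hintExp (i12.add i2)
    filter_upwards [hbd] with ω hω
    exact exp_mul_le_quad hl hB.le (le_trans (le_abs_self _) hω) hc
  have hcalc : ∫ ω, (1 + l * Y ω + l^2 * (Y ω)^2 / (2*(1 - l*B/3))) ∂μ
      = 1 + l^2 * (∫ ω, (Y ω)^2 ∂μ) / (2*(1 - l*B/3)) := by
    rw [integral_add i12 i2, integral_add (integrable_const (1:ℝ)) i1,
      integral_const, integral_const_mul, hzero, integral_div, integral_const_mul]
    simp
  have hfin : 1 + l^2 * (∫ ω, (Y ω)^2 ∂μ) / (2*(1 - l*B/3))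
      ≤ Real.exp (l^2 * v / (2*(1 - l*B/3))) := by
    have h1 : l^2 * (∫ ω, (Y ω)^2 ∂μ) / (2*(1 - l*B/3)) ≤ l^2 * v / (2*(1 - l*B/3)) := by
      gcongr
    have h2 := Real.add_one_le_exp (l^2 * v / (2*(1 - l*B/3)))
    linarith
  calc mgf Y μ l = ∫ ω, Real.exp (l * Y ω) ∂μ := rfl
    _ ≤ _ := hmono
    _ = _ := hcalc
    _ ≤ _ := hfin

open MeasureTheory ProbabilityTheory Finset in
lemma bernstein_tail {Ω : Type*} [MeasurableSpace Ω] {μ : Measure Ω} [IsProbabilityMeasure μ]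
    (Y : ℕ → Ω → ℝ) (hmeas : ∀ i, Measurable (Y i))
    (hindep : iIndepFun Y μ)
    {B v L : ℝ} (hB : 0 < B) (hv : 0 ≤ v) (hL : 0 < L)
    (n : ℕ) (hn : 1 ≤ n)
    (hbd : ∀ i ∈ Finset.Icc 1 n, ∀ᵐ ω ∂μ, |Y i ω| ≤ B)
    (hzero : ∀ i ∈ Finset.Icc 1 n, ∫ ω, Y i ω ∂μ = 0)
    (hvar : ∀ i ∈ Finset.Icc 1 n, ∫ ω, (Y i ω)^2 ∂μ ≤ v) :
    μ {ω | Real.sqrt (2*n*v*L) + 2/3*B*L ≤ ∑ i ∈ Finset.Icc 1 n, Y i ω}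
      ≤ ENNReal.ofReal (Real.exp (-L)) := by
  have hnv : (0:ℝ) ≤ n*v := mul_nonneg (Nat.cast_nonneg n) hv
  set s : ℝ := Real.sqrt (2*n*v*L) with hs_def
  have hs0 : 0 ≤ s := Real.sqrt_nonneg _
  have hs2 : s^2 = 2*n*v*L := Real.sq_sqrt (by positivity)
  set r : ℝ := s + 2/3*B*L with hr_def
  have hr0 : 0 < r := by positivity
  set q : ℝ := n*v + 2/3*B*r with hq_def
  have hq0 : 0 < q := by positivity
  set p : ℝ := n*v + B*r/3 with hp_def
  have hp0 : 0 < p := by positivity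
  set l : ℝ := r/q with hl_def
  have hl0 : 0 < l := div_pos hr0 hq0
  have e1 : 1 - l*B/3 = p/q := by
    rw [hl_def, hp_def, hq_def]
    field_simp
    ring
  have hc : l*B/3 < 1 := by
    rw [show l*B/3 = 1 - (1 - l*B/3) by ring, e1]
    have : 0 < p/q := div_pos hp0 hq0
    linarith
  have hintEach : ∀ i ∈ Finset.Icc 1 n, Integrable (fun ω => Real.exp (l * Y i ω)) μ := by
    intro i hi
    apply integrable_of_abs_le ((hmeas i).const_mul l).exp (C := Real.exp (l*B))
    filter_upwards [hbd i hi] with ω hω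
    rw [abs_of_pos (Real.exp_pos _), Real.exp_le_exp]
    exact mul_le_mul_of_nonneg_left (le_trans (le_abs_self _) hω) hl0.le
  have hintSum : Integrable (fun ω => Real.exp (l * (∑ i ∈ Finset.Icc 1 n, Y i) ω)) μ :=
    hindep.integrable_exp_mul_sum hmeas hintEach
  have chern := measure_ge_le_exp_mul_mgf (X := ∑ i ∈ Finset.Icc 1 n, Y i) (μ := μ) (t := l)
    r hl0.le hintSum
  have hmgf : mgf (∑ i ∈ Finset.Icc 1 n, Y i) μ l
      ≤ Real.exp (n * (l^2*v/(2*(1 - l*B/3)))) := by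
    rw [hindep.mgf_sum hmeas]
    calc ∏ i ∈ Finset.Icc 1 n, mgf (Y i) μ l
        ≤ ∏ _i ∈ Finset.Icc 1 n, Real.exp (l^2*v/(2*(1 - l*B/3))) := by
          apply Finset.prod_le_prod (fun i _ => mgf_nonneg)
          intro i hi
          exact mgf_le_of_bound (hmeas i) hB hl0.le hc (hbd i hi) (hzero i hi) (hvar i hi)
      _ = Real.exp (n * (l^2*v/(2*(1 - l*B/3)))) := by
          rw [Finset.prod_const, ← Real.exp_nat_mul, Nat.card_Icc]
          simp
  have hexp : Real.exp (-l*r) * Real.exp (n * (l^2*v/(2*(1 - l*B/3)))) ≤ Real.exp (-L) := by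
    rw [← Real.exp_add, Real.exp_le_exp]
    have key : -l*r + n * (l^2*v/(2*(1 - l*B/3))) = -(r^2/(2*p)) := by
      rw [e1, hl_def]
      field_simp
      rw [hq_def, hp_def]
      ring
    rw [key]
    have h2 : 2*L*p ≤ r^2 := by
      rw [hp_def, hr_def]
      nlinarith [hs2, mul_nonneg (mul_nonneg hB.le hL.le) hs0]
    have : L ≤ r^2/(2*p) := by
      rw [le_div_iff₀ (by positivity)]
      linarith
    linarith
  have final : (μ {ω | r ≤ (∑ i ∈ Finset.Icc 1 n, Y i) ω}).toReal ≤ Real.exp (-L) := by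
    calc (μ {ω | r ≤ (∑ i ∈ Finset.Icc 1 n, Y i) ω}).toReal
        ≤ Real.exp (-l*r) * mgf (∑ i ∈ Finset.Icc 1 n, Y i) μ l := chern
      _ ≤ Real.exp (-l*r) * Real.exp (n * (l^2*v/(2*(1 - l*B/3)))) := by
          exact mul_le_mul_of_nonneg_left hmgf (Real.exp_pos _).le
      _ ≤ Real.exp (-L) := hexp
  have hset : {ω | r ≤ ∑ i ∈ Finset.Icc 1 n, Y i ω}
      = {ω | r ≤ (∑ i ∈ Finset.Icc 1 n, Y i) ω} := by
    ext ω; simp [Finset.sum_apply]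
  rw [hset]
  exact (ENNReal.le_ofReal_iff_toReal_le (measure_ne_top μ _) (Real.exp_pos _).le).mpr final

lemma telescope_hasSum : HasSum (fun k : ℕ => (1:ℝ)/((k+1)*(k+2))) 1 := by
  rw [hasSum_iff_tendsto_nat_of_nonneg (fun i => by positivity)]
  have hpart : ∀ N : ℕ, ∑ k ∈ Finset.range N, (1:ℝ)/((k+1)*(k+2)) = 1 - 1/(N+1) := by
    intro N
    induction N with
    | zero => simp
    | succ N ih =>
      rw [Finset.sum_range_succ, ih]
      have h1 : ((N:ℝ)+1) ≠ 0 := by positivity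
      have h2 : ((N:ℝ)+2) ≠ 0 := by positivity
      push_cast
      field_simp
      ring
  simp_rw [hpart]
  have := tendsto_one_div_add_atTop_nhds_zero_nat (𝕜 := ℝ)
  have h2 : Filter.Tendsto (fun N : ℕ => 1 - 1/((N:ℝ)+1)) Filter.atTop (nhds (1 - 0)) :=
    Filter.Tendsto.sub tendsto_const_nhds (by exact_mod_cast this)
  simpa using h2

lemma telescope_tsum {δ : ℝ} (hδ : 0 ≤ δ) :
    ∑' k : ℕ, ENNReal.ofReal (δ/((k+1)*(k+2))) = ENNReal.ofReal δ := by
  have hs : HasSum (fun k : ℕ => δ/(((k:ℝ)+1)*((k:ℝ)+2))) δ := by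
    have := telescope_hasSum.mul_left δ
    simp only [mul_one] at this
    simpa only [mul_one_div] using this
  calc ∑' k : ℕ, ENNReal.ofReal (δ/((k+1)*(k+2)))
      = ENNReal.ofReal (∑' k : ℕ, δ/(((k:ℝ)+1)*((k:ℝ)+2))) :=
        (ENNReal.ofReal_tsum_of_nonneg (fun k => by positivity) hs.summable).symm
    _ = ENNReal.ofReal δ := by rw [hs.tsum_eq]

lemma absorb_sqrt {a S D K : ℝ} (ha : 0 < a) (hS : 0 ≤ S) (hD : 0 ≤ D)
    (hK : 0 ≤ K) (hK7 : 2*K + 4 ≤ 7)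
    (h : D ≤ 2*a*Real.sqrt (S + D) + K*a^2) : D ≤ 2*a*Real.sqrt S + 7*a^2 := by
  by_contra hcon
  push_neg at hcon
  set u : ℝ := Real.sqrt S with hu_def
  set t : ℝ := Real.sqrt (S + D) with ht_def
  have hu0 : 0 ≤ u := Real.sqrt_nonneg _
  have ht0 : 0 ≤ t := Real.sqrt_nonneg _
  have hu2 : u^2 = S := Real.sq_sqrt hS
  have ht2 : t^2 = S + D := Real.sq_sqrt (by linarith)
  have hDpos : 0 < D := by nlinarith
  have hnn : 0 ≤ D - K*a^2 := by nlinarith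
  have hsq : (D - K*a^2)^2 ≤ (2*a*t)^2 := by
    exact pow_le_pow_left₀ hnn (by linarith) 2
  have h2au : 0 ≤ 2*a*u := by positivity
  have hlt : 2*a*u ≤ D := by nlinarith
  have h4 : 4*a^2*S ≤ 2*a*u*D := by
    have := mul_le_mul_of_nonneg_left hlt h2au
    nlinarith [hu2]
  have ht4 : (2*a*t)^2 = 4*a^2*S + 4*a^2*D := by
    rw [show (2*a*t)^2 = 4*a^2*t^2 from by ring, ht2]; ring
  have h5 : D^2 ≤ 2*a*u*D + (2*K+4)*a^2*D := by nlinarith [sq_nonneg (K*a^2)]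
  have h6 : D ≤ 2*a*u + (2*K+4)*a^2 := by
    have := (mul_le_mul_iff_of_pos_right hDpos).mp (by nlinarith : D*D ≤ (2*a*u + (2*K+4)*a^2)*D)
    linarith
  nlinarith


/-- Anytime Bernstein inequality, empirical form (Lemma B.3): for i.i.d. `X_i ∈ [0,B]` with
mean `m`, with probability at least `1 - δ`, simultaneously for all `n ≥ 1`,
`|∑_{i=1}^n (X_i - m)| ≤ 2√(B (∑_{i=1}^n X_i) ln(2n/δ)) + 7 B ln(2n/δ)`. -/
theorem anytime_bernstein_empirical
    {Ω : Type*} {m0 : MeasurableSpace Ω} {μ : Measure Ω} [IsProbabilityMeasure μ]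
    (X : ℕ → Ω → ℝ) (B : ℝ) (hB : 0 < B)
    (hmeas : ∀ i, Measurable (X i))
    (hindep : iIndepFun X μ)
    (hident : ∀ i, IdentDistrib (X i) (X 1) μ μ)
    (hbound : ∀ i, ∀ᵐ ω ∂μ, X i ω ∈ Set.Icc (0 : ℝ) B)
    (m : ℝ) (hm : m = ∫ ω, X 1 ω ∂μ)
    (δ : ℝ) (hδ0 : 0 < δ) (hδ1 : δ < 1) :
    ENNReal.ofReal (1 - δ) ≤
      μ {ω | ∀ n : ℕ, 1 ≤ n →
        |∑ i ∈ Finset.Icc 1 n, (X i ω - m)| ≤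
          2 * Real.sqrt (B * (∑ i ∈ Finset.Icc 1 n, X i ω) * Real.log (2 * n / δ)) +
            7 * B * Real.log (2 * n / δ)} := by
  classical
  -- basic facts
  have hintX : ∀ i, Integrable (X i) μ := fun i =>
    integrable_of_abs_le (hmeas i) (C := B)
      (by filter_upwards [hbound i] with ω h
          rw [abs_le]; exact ⟨by linarith [h.1], h.2⟩)
  have hm0 : 0 ≤ m := by
    rw [hm]
    exact integral_nonneg_of_ae (by filter_upwards [hbound 1] with ω h using h.1)
  have hmB : m ≤ B := by
    rw [hm]
    have h1 : ∫ ω, X 1 ω ∂μ ≤ ∫ _ω, B ∂μ := integral_mono_ae (hintX 1) (integrable_const B)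
      (by filter_upwards [hbound 1] with ω h using h.2)
    simpa using h1
  have hmean : ∀ i, ∫ ω, X i ω ∂μ = m := fun i => by rw [hm]; exact (hident i).integral_eq
  set v : ℝ := B*m with hv_def
  have hv : 0 ≤ v := mul_nonneg hB.le hm0
  set Y : ℕ → Ω → ℝ := fun i ω => X i ω - m with hY_def
  set Z : ℕ → Ω → ℝ := fun i ω => m - X i ω with hZ_def
  have hYmeas : ∀ i, Measurable (Y i) := fun i => (hmeas i).sub measurable_const
  have hZmeas : ∀ i, Measurable (Z i) := fun i => measurable_const.sub (hmeas i)
  have hYindep : iIndepFun Y μ :=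
    hindep.comp (fun _ (x:ℝ) => x - m) (fun _ => measurable_id.sub measurable_const)
  have hZindep : iIndepFun Z μ :=
    hindep.comp (fun _ (x:ℝ) => m - x) (fun _ => measurable_const.sub measurable_id)
  have hYbd : ∀ i, ∀ᵐ ω ∂μ, |Y i ω| ≤ B := fun i => by
    filter_upwards [hbound i] with ω h
    rw [abs_le]; exact ⟨by simp [hY_def]; linarith [h.1], by simp [hY_def]; linarith [h.2]⟩
  have hZbd : ∀ i, ∀ᵐ ω ∂μ, |Z i ω| ≤ B := fun i => by
    filter_upwards [hbound i] with ω h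
    rw [abs_le]; exact ⟨by simp [hZ_def]; linarith [h.2], by simp [hZ_def]; linarith [h.1]⟩
  have hYzero : ∀ i, ∫ ω, Y i ω ∂μ = 0 := fun i => by
    simp only [hY_def]
    rw [integral_sub (hintX i) (integrable_const m), hmean i, integral_const]
    simp
  have hZzero : ∀ i, ∫ ω, Z i ω ∂μ = 0 := fun i => by
    simp only [hZ_def]
    rw [integral_sub (integrable_const m) (hintX i), hmean i, integral_const]
    simp
  have hintX2 : Integrable (fun ω => (X 1 ω)^2) μ := by
    apply integrable_of_abs_le ((hmeas 1).pow_const 2) (C := B^2)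
    filter_upwards [hbound 1] with ω h
    rw [abs_pow]
    apply pow_le_pow_left₀ (abs_nonneg _)
    rw [abs_le]; exact ⟨by linarith [h.1], h.2⟩
  have hvar1 : ∫ ω, (X 1 ω - m)^2 ∂μ ≤ v := by
    have e1 : (fun ω => (X 1 ω - m)^2) = fun ω => (X 1 ω)^2 - (2*m) * X 1 ω + m^2 := by
      funext ω; ring
    have iMul : Integrable (fun ω => 2*m*X 1 ω) μ := (hintX 1).const_mul (2*m)
    have iA : Integrable (fun ω => (X 1 ω)^2 - 2*m*X 1 ω) μ := hintX2.sub iMul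
    have e : ∫ ω, (X 1 ω - m)^2 ∂μ = (∫ ω, (X 1 ω)^2 ∂μ) - m^2 := by
      rw [e1, integral_add iA (integrable_const _),
        integral_sub hintX2 iMul, integral_const_mul, hmean 1,
        integral_const]
      simp; ring
    have hX2 : ∫ ω, (X 1 ω)^2 ∂μ ≤ B*m := by
      have h1 : ∫ ω, (X 1 ω)^2 ∂μ ≤ ∫ ω, B * X 1 ω ∂μ :=
        integral_mono_ae hintX2 ((hintX 1).const_mul B)
          (by filter_upwards [hbound 1] with ω h; nlinarith [h.1, h.2])
      rwa [integral_const_mul, hmean 1] at h1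
    rw [e, hv_def]; nlinarith [sq_nonneg m]
  have hYvar : ∀ i, ∫ ω, (Y i ω)^2 ∂μ ≤ v := fun i => by
    have hcmp := (hident i).comp (u := fun x : ℝ => (x - m)^2)
      ((measurable_id.sub measurable_const).pow_const 2)
    have heq := hcmp.integral_eq
    simp only [Function.comp] at heq
    simp only [hY_def]
    rw [heq]
    exact hvar1
  have hZvar : ∀ i, ∫ ω, (Z i ω)^2 ∂μ ≤ v := fun i => by
    have e1 : (fun ω => (Z i ω)^2) = fun ω => (Y i ω)^2 := by
      funext ω; simp only [hY_def, hZ_def]; ring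
    rw [e1]; exact hYvar i
  -- bad events
  set L : ℕ → ℝ := fun n => Real.log (2*n*(n+1)/δ) with hL_def
  have hLpos : ∀ n : ℕ, 1 ≤ n → 0 < L n := by
    intro n hn
    have hn' : (1:ℝ) ≤ n := by exact_mod_cast hn
    apply Real.log_pos
    rw [lt_div_iff₀ hδ0]
    nlinarith
  set r : ℕ → ℝ := fun n => Real.sqrt (2*n*v*(L n)) + 2/3*B*(L n) with hr_def
  set Bad : ℕ → Set Ω := fun n =>
    {ω | r n ≤ ∑ i ∈ Finset.Icc 1 n, Y i ω} ∪ {ω | r n ≤ ∑ i ∈ Finset.Icc 1 n, Z i ω}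
    with hBad_def
  have hBadLe : ∀ n, 1 ≤ n → μ (Bad n) ≤ ENNReal.ofReal (δ/(n*(n+1))) := by
    intro n hn
    have hn' : (1:ℝ) ≤ n := by exact_mod_cast hn
    have h1 := bernstein_tail Y hYmeas hYindep hB hv (hLpos n hn) n hn
      (fun i _ => hYbd i) (fun i _ => hYzero i) (fun i _ => hYvar i)
    have h2 := bernstein_tail Z hZmeas hZindep hB hv (hLpos n hn) n hn
      (fun i _ => hZbd i) (fun i _ => hZzero i) (fun i _ => hZvar i)
    have hexp : Real.exp (-(L n)) = δ/(2*n*(n+1)) := by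
      simp only [hL_def]
      rw [Real.exp_neg, Real.exp_log (by positivity), inv_div]
    calc μ (Bad n) ≤ μ {ω | r n ≤ ∑ i ∈ Finset.Icc 1 n, Y i ω}
          + μ {ω | r n ≤ ∑ i ∈ Finset.Icc 1 n, Z i ω} := measure_union_le _ _
      _ ≤ ENNReal.ofReal (Real.exp (-(L n))) + ENNReal.ofReal (Real.exp (-(L n))) :=
          add_le_add h1 h2
      _ = ENNReal.ofReal (δ/(n*(n+1))) := by
          rw [hexp, ← ENNReal.ofReal_add (by positivity) (by positivity)]
          congr 1
          field_simp
          ring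
  set badU : Set Ω := ⋃ k : ℕ, Bad (k+1) with hbadU_def
  have hbadU : μ badU ≤ ENNReal.ofReal δ := by
    calc μ badU ≤ ∑' k : ℕ, μ (Bad (k+1)) := measure_iUnion_le _
      _ ≤ ∑' k : ℕ, ENNReal.ofReal (δ/((k+1)*(k+2))) := by
          apply ENNReal.tsum_le_tsum
          intro k
          have := hBadLe (k+1) (Nat.le_add_left 1 k)
          convert this using 3
          push_cast
          ring
      _ = ENNReal.ofReal δ := telescope_tsum hδ0.le
  -- the good event
  have key : ∀ᵐ ω ∂μ, ω ∉ badU → ∀ n : ℕ, 1 ≤ n →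
      |∑ i ∈ Finset.Icc 1 n, (X i ω - m)| ≤
        2 * Real.sqrt (B * (∑ i ∈ Finset.Icc 1 n, X i ω) * Real.log (2 * n / δ)) +
          7 * B * Real.log (2 * n / δ) := by
    filter_upwards [ae_all_iff.mpr hbound] with ω hX hnb n hn
    have hn' : (1:ℝ) ≤ n := by exact_mod_cast hn
    obtain ⟨k, hk⟩ : ∃ k, k+1 = n := ⟨n-1, Nat.succ_pred_eq_of_pos hn⟩
    have hnot : ω ∉ Bad n := by
      rw [← hk]
      exact fun h => hnb (Set.mem_iUnion.mpr ⟨k, h⟩)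
    rw [hBad_def] at hnot
    simp only [Set.mem_union, Set.mem_setOf_eq, not_or, not_le] at hnot
    obtain ⟨h1, h2⟩ := hnot
    set S : ℝ := ∑ i ∈ Finset.Icc 1 n, X i ω with hS_def
    have hSsum : ∑ i ∈ Finset.Icc 1 n, Y i ω = S - n*m := by
      simp only [hY_def, hS_def, Finset.sum_sub_distrib, Finset.sum_const, Nat.card_Icc,
        smul_eq_mul]
      push_cast [Nat.add_sub_cancel]
      ring
    have hZsum : ∑ i ∈ Finset.Icc 1 n, Z i ω = n*m - S := by
      simp only [hZ_def, hS_def, Finset.sum_sub_distrib, Finset.sum_const, Nat.card_Icc,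
        smul_eq_mul]
      push_cast [Nat.add_sub_cancel]
      ring
    rw [hSsum] at h1
    rw [hZsum] at h2
    have hD : |S - n*m| ≤ r n := abs_le.mpr ⟨by linarith, by linarith⟩
    set ℓ : ℝ := Real.log (2*n/δ) with hl_def
    have hℓpos : 0 < ℓ := by
      apply Real.log_pos
      rw [lt_div_iff₀ hδ0]
      nlinarith
    have hLle : L n ≤ 2*ℓ := by
      have harg : 2*(n:ℝ)*(n+1)/δ ≤ (2*n/δ)^2 := by
        rw [div_pow, div_le_div_iff₀ hδ0 (by positivity)]
        have hcert : (0:ℝ) ≤ 2*(n:ℝ)*δ*(((n:ℝ)+1)*(1-δ) + ((n:ℝ)-1)) := by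
          apply mul_nonneg (by positivity)
          nlinarith
        nlinarith [hcert]
      have hlog := Real.log_le_log (by positivity) harg
      simp only [hL_def]
      calc Real.log (2*(n:ℝ)*(n+1)/δ) ≤ Real.log ((2*(n:ℝ)/δ)^2) := hlog
        _ = 2*ℓ := by rw [Real.log_pow, hl_def]; push_cast; ring
    have hnm0 : (0:ℝ) ≤ n*m := by positivity
    have hrle : r n ≤ 2*Real.sqrt ((B*ℓ)*(n*m)) + 4/3*(B*ℓ) := by
      have t1 : Real.sqrt (2*n*v*(L n)) ≤ 2*Real.sqrt ((B*ℓ)*(n*m)) := by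
        have harg : 2*n*v*(L n) ≤ 2^2*((B*ℓ)*(n*m)) := by
          rw [hv_def]
          have hc : (0:ℝ) ≤ 2*B*m*(n:ℝ) := by positivity
          have hprod := mul_le_mul_of_nonneg_left hLle hc
          linarith only [hprod]
        calc Real.sqrt (2*n*v*(L n)) ≤ Real.sqrt (2^2*((B*ℓ)*(n*m))) := Real.sqrt_le_sqrt harg
          _ = 2*Real.sqrt ((B*ℓ)*(n*m)) := by
            rw [Real.sqrt_mul (by norm_num), Real.sqrt_sq (by norm_num)]
      have t2 : 2/3*B*(L n) ≤ 4/3*(B*ℓ) := by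
        have := mul_le_mul_of_nonneg_left hLle hB.le
        linarith only [this]
      simp only [hr_def]
      linarith only [t1, t2]
    have hnmle : n*m ≤ S + |S - n*m| := by
      have := neg_abs_le (S - n*m)
      linarith only [this]
    have hSnn : 0 ≤ S := Finset.sum_nonneg (fun i _ => (hX i).1)
    set a : ℝ := Real.sqrt (B*ℓ) with ha_def
    have haa : 0 < a := Real.sqrt_pos.mpr (by positivity)
    have ha2 : a^2 = B*ℓ := Real.sq_sqrt (by positivity)
    have hD2 : |S - n*m| ≤ 2*a*Real.sqrt (S + |S - n*m|) + (4/3)*a^2 := by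
      have hmono : Real.sqrt ((B*ℓ)*(n*m)) ≤ Real.sqrt ((B*ℓ)*(S + |S-n*m|)) :=
        Real.sqrt_le_sqrt (mul_le_mul_of_nonneg_left hnmle (by positivity))
      have e : Real.sqrt ((B*ℓ)*(S+|S-n*m|)) = a * Real.sqrt (S+|S-n*m|) := by
        rw [ha_def, ← Real.sqrt_mul (by positivity)]
      rw [ha2]
      calc |S-n*m| ≤ r n := hD
        _ ≤ 2*Real.sqrt ((B*ℓ)*(n*m)) + 4/3*(B*ℓ) := hrle
        _ ≤ 2*(a*Real.sqrt (S+|S-n*m|)) + 4/3*(B*ℓ) := by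
            have := hmono.trans_eq e
            linarith only [this]
        _ = 2*a*Real.sqrt (S+|S-n*m|) + (4/3)*(B*ℓ) := by ring
    have habs := absorb_sqrt haa hSnn (abs_nonneg _) (by norm_num) (by norm_num) hD2
    have hsz : a * Real.sqrt S = Real.sqrt (B * S * ℓ) := by
      rw [ha_def, ← Real.sqrt_mul (by positivity : (0:ℝ) ≤ B*ℓ)]
      congr 1
      ring
    have hfin : 2*a*Real.sqrt S + 7*a^2
        = 2 * Real.sqrt (B * S * ℓ) + 7 * B * ℓ := by
      rw [ha2, ← hsz]
      ring
    have hgoal_sum : ∑ i ∈ Finset.Icc 1 n, (X i ω - m) = S - n*m := hSsum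
    rw [hgoal_sum]
    exact habs.trans (le_of_eq hfin)
  -- conclude
  set G : Set Ω := {ω | ∀ n : ℕ, 1 ≤ n →
        |∑ i ∈ Finset.Icc 1 n, (X i ω - m)| ≤
          2 * Real.sqrt (B * (∑ i ∈ Finset.Icc 1 n, X i ω) * Real.log (2 * n / δ)) +
            7 * B * Real.log (2 * n / δ)} with hG_def
  have hsub : μ Gᶜ ≤ μ badU := by
    apply measure_mono_ae
    filter_upwards [key] with ω h hGc
    by_contra hnb
    exact hGc (h hnb)
  have huniv : (1:ENNReal) ≤ μ G + μ Gᶜ := by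
    have h1 : μ Set.univ ≤ μ G + μ Gᶜ := by
      rw [← Set.union_compl_self G]
      exact measure_union_le _ _
    rwa [measure_univ] at h1
  calc ENNReal.ofReal (1 - δ) = 1 - ENNReal.ofReal δ := by
        rw [ENNReal.ofReal_sub _ hδ0.le, ENNReal.ofReal_one]
    _ ≤ μ G := by
        rw [tsub_le_iff_right]
        calc (1:ENNReal) ≤ μ G + μ Gᶜ := huniv
          _ ≤ μ G + ENNReal.ofReal δ := add_le_add_right (hsub.trans hbadU) _
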